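/- Let S = {(x,y) ∈ ℤ×ℤ : x + 5y ≡ 0 (mod 7)} be a color class of the mod-7 vertex coloring of the triangular-lattice graph GΔ. Then: (i) any two distinct elements of S are at graph distance at least 3 in GΔ; and (ii) every vertex of ℤ×ℤ is at graph distance at most 1 from S. Hence S is an efficient dominating set of GΔ whose removal produces the vertex set of the C&R 3⁴.6 tiling complex. -/

import Mathlib

/-- The triangular-lattice graph on ℤ × ℤ: two vertices adjacent iff their difference is
±(1,0), ±(0,1) or ±(1,−1). -/
def triGraph : SimpleGraph (ℤ × ℤ) :=
  SimpleGraph.fromRel (fun u v => u - v = (1, 0) ∨ u - v = (0, 1) ∨ u - v = (1, -1))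

/-- The color class S = {(x,y) : x + 5y ≡ 0 (mod 7)}. -/
def S : Set (ℤ × ℤ) := {p : ℤ × ℤ | ((p.1 + 5 * p.2 : ℤ) : ZMod 7) = 0}

lemma adj_iff (u v : ℤ × ℤ) : triGraph.Adj u v ↔
    (u.1 - v.1 = 1 ∧ u.2 = v.2) ∨ (u.1 = v.1 ∧ u.2 - v.2 = 1) ∨
    (u.1 - v.1 = 1 ∧ u.2 - v.2 = -1) ∨ (u.1 - v.1 = -1 ∧ u.2 = v.2) ∨
    (u.1 = v.1 ∧ u.2 - v.2 = -1) ∨ (u.1 - v.1 = -1 ∧ u.2 - v.2 = 1) := by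
  simp only [triGraph, SimpleGraph.fromRel_adj, Prod.ext_iff, Prod.fst_sub, Prod.snd_sub, ne_eq]
  omega

lemma mem_S_iff (p : ℤ × ℤ) : p ∈ S ↔ (7 : ℤ) ∣ (p.1 + 5 * p.2) := by
  rw [S, Set.mem_setOf_eq, ZMod.intCast_zmod_eq_zero_iff_dvd]
  norm_num

lemma not_adj_S {u v : ℤ × ℤ} (hu : u ∈ S) (hv : v ∈ S) : ¬ triGraph.Adj u v := by
  rw [mem_S_iff] at hu hv
  rw [adj_iff]
  omega

lemma two_step {u v w : ℤ × ℤ} (hu : u ∈ S) (hv : v ∈ S)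
    (h1 : triGraph.Adj u w) (h2 : triGraph.Adj w v) : u = v := by
  rw [mem_S_iff] at hu hv
  rw [adj_iff] at h1 h2
  exact Prod.ext (by omega) (by omega)

lemma reach_aux : ∀ n : ℕ, ∀ u v : ℤ × ℤ,
    (v.1 - u.1).natAbs + (v.2 - u.2).natAbs ≤ n → triGraph.Reachable u v := by
  intro n
  induction n with
  | zero =>
    intro u v h
    have : u = v := Prod.ext (by omega) (by omega)
    rw [this]
  | succ n ih =>
    intro u v h
    rcases lt_trichotomy u.1 v.1 with h1 | h1 | h1
    · have ha : triGraph.Adj u (u.1 + 1, u.2) := by simp only [adj_iff, and_true, true_and]; omega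
      refine ha.reachable.trans (ih (u.1 + 1, u.2) v ?_)
      show (v.1 - (u.1 + 1)).natAbs + (v.2 - u.2).natAbs ≤ n
      omega
    · rcases lt_trichotomy u.2 v.2 with h2 | h2 | h2
      · have ha : triGraph.Adj u (u.1, u.2 + 1) := by simp only [adj_iff, and_true, true_and]; omega
        refine ha.reachable.trans (ih (u.1, u.2 + 1) v ?_)
        show (v.1 - u.1).natAbs + (v.2 - (u.2 + 1)).natAbs ≤ n
        omega
      · have : u = v := Prod.ext h1 h2
        rw [this]
      · have ha : triGraph.Adj u (u.1, u.2 - 1) := by simp only [adj_iff, and_true, true_and]; omega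
        refine ha.reachable.trans (ih (u.1, u.2 - 1) v ?_)
        show (v.1 - u.1).natAbs + (v.2 - (u.2 - 1)).natAbs ≤ n
        omega
    · have ha : triGraph.Adj u (u.1 - 1, u.2) := by simp only [adj_iff, and_true, true_and]; omega
      refine ha.reachable.trans (ih (u.1 - 1, u.2) v ?_)
      show (v.1 - (u.1 - 1)).natAbs + (v.2 - u.2).natAbs ≤ n
      omega

lemma close_elt (v : ℤ × ℤ) : ∃ w ∈ S, w = v ∨ triGraph.Adj v w := by
  have hr : (v.1 + 5 * v.2) % 7 = 0 ∨ (v.1 + 5 * v.2) % 7 = 1 ∨ (v.1 + 5 * v.2) % 7 = 2 ∨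
      (v.1 + 5 * v.2) % 7 = 3 ∨ (v.1 + 5 * v.2) % 7 = 4 ∨ (v.1 + 5 * v.2) % 7 = 5 ∨
      (v.1 + 5 * v.2) % 7 = 6 := by omega
  rcases hr with h | h | h | h | h | h | h
  · exact ⟨v, (mem_S_iff v).mpr (by omega), Or.inl rfl⟩
  · exact ⟨(v.1 - 1, v.2), (mem_S_iff _).mpr (show (7:ℤ) ∣ (v.1 - 1) + 5 * v.2 by omega),
      Or.inr (by simp only [adj_iff, and_true, true_and]; omega)⟩
  · exact ⟨(v.1, v.2 + 1), (mem_S_iff _).mpr (show (7:ℤ) ∣ v.1 + 5 * (v.2 + 1) by omega),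
      Or.inr (by simp only [adj_iff, and_true, true_and]; omega)⟩
  · exact ⟨(v.1 - 1, v.2 + 1), (mem_S_iff _).mpr (show (7:ℤ) ∣ (v.1 - 1) + 5 * (v.2 + 1) by omega),
      Or.inr (by simp only [adj_iff, and_true, true_and]; omega)⟩
  · exact ⟨(v.1 + 1, v.2 - 1), (mem_S_iff _).mpr (show (7:ℤ) ∣ (v.1 + 1) + 5 * (v.2 - 1) by omega),
      Or.inr (by simp only [adj_iff, and_true, true_and]; omega)⟩
  · exact ⟨(v.1, v.2 - 1), (mem_S_iff _).mpr (show (7:ℤ) ∣ v.1 + 5 * (v.2 - 1) by omega),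
      Or.inr (by simp only [adj_iff, and_true, true_and]; omega)⟩
  · exact ⟨(v.1 + 1, v.2), (mem_S_iff _).mpr (show (7:ℤ) ∣ (v.1 + 1) + 5 * v.2 by omega),
      Or.inr (by simp only [adj_iff, and_true, true_and]; omega)⟩

theorem stmt13 :
    -- (i) any two distinct elements of S are at graph distance at least 3
    (∀ u ∈ S, ∀ v ∈ S, u ≠ v → 3 ≤ triGraph.dist u v) ∧
    -- (ii) every vertex is at graph distance at most 1 from S
    (∀ v : ℤ × ℤ, ∃ w ∈ S, triGraph.dist v w ≤ 1) ∧
    -- hence S is an efficient dominating set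
    (∀ v : ℤ × ℤ, ∃! w : ℤ × ℤ, w ∈ S ∧ w ∈ insert v (triGraph.neighborSet v)) := by
  refine ⟨?_, ?_, ?_⟩
  · intro u hu v hv hne
    by_contra hlt
    push_neg at hlt
    have hr : triGraph.Reachable u v := reach_aux _ u v le_rfl
    obtain ⟨p, hp⟩ := hr.exists_walk_length_eq_dist
    have h0 : triGraph.dist u v ≠ 0 := fun h => hne (hr.dist_eq_zero_iff.mp h)
    cases p with
    | nil => simp at hp; exact hne rfl
    | cons h q =>
      cases q with
      | nil =>
        exact not_adj_S hu hv h
      | cons h' q' =>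
        cases q' with
        | nil => exact hne (two_step hu hv h h')
        | cons h'' q'' => simp [SimpleGraph.Walk.length_cons] at hp; omega
  · intro v
    obtain ⟨w, hwS, hw⟩ := close_elt v
    refine ⟨w, hwS, ?_⟩
    rcases hw with rfl | ha
    · rw [SimpleGraph.dist_self]; omega
    · calc triGraph.dist v w ≤ ha.toWalk.length := triGraph.dist_le _
        _ = 1 := by simp
  · intro v
    obtain ⟨w, hwS, hw⟩ := close_elt v
    refine ⟨w, ⟨hwS, ?_⟩, ?_⟩
    · rcases hw with rfl | ha
      · exact Set.mem_insert _ _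
      · exact Set.mem_insert_of_mem _ ((SimpleGraph.mem_neighborSet _ _ _).mpr ha)
    · rintro w' ⟨hw'S, hw'⟩
      rcases Set.mem_insert_iff.mp hw' with h1 | h1
      · subst h1
        rcases hw with rfl | ha
        · rfl
        · exact absurd ha (not_adj_S hw'S hwS)
      · rw [SimpleGraph.mem_neighborSet] at h1
        rcases hw with rfl | ha
        · exact absurd h1 (not_adj_S hwS hw'S)
        · exact two_step hw'S hwS h1.symm ha
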